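/- arXiv:2404.07184 — 3 statements merged into one kernel-verified Lean document; each statement's English description precedes it below -/
import Mathlib

section
/- The moment cosheaf over a framework (G,p) in ℝ² is isomorphic to the constant cosheaf with stalk ℝ³: there exist linear isomorphisms at each vertex and edge stalk commuting with the cosheaf maps, hence H₁M ≅ (H₁G)³ and H₀M ≅ (H₀G)³. -/
open Module Function

def wedge (F d : Fin 2 → ℝ) : ℝ := F 0 * d 1 - F 1 * d 0

def T (d : Fin 2 → ℝ) (x : ℝ × (Fin 2 → ℝ)) : ℝ × (Fin 2 → ℝ) :=
  (x.1 + wedge x.2 d, x.2)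

lemma T_comp (d₁ d₂ : Fin 2 → ℝ) (x : ℝ × (Fin 2 → ℝ)) :
    T d₁ (T d₂ x) = T (d₁ + d₂) x := by
  simp only [T, wedge, Pi.add_apply, Prod.mk.injEq]
  exact ⟨by ring, trivial⟩

lemma T_zero (x : ℝ × (Fin 2 → ℝ)) : T 0 x = x := by
  simp [T, wedge]

/-- `T d` as a linear equivalence. -/
noncomputable def Te (d : Fin 2 → ℝ) : (ℝ × (Fin 2 → ℝ)) ≃ₗ[ℝ] (ℝ × (Fin 2 → ℝ)) where
  toFun := T d
  invFun := T (-d)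
  map_add' x y := by simp only [T, wedge, Prod.fst_add, Prod.snd_add, Pi.add_apply,
    Prod.mk_add_mk, Prod.mk.injEq]; exact ⟨by ring, trivial⟩
  map_smul' c x := by simp only [T, wedge, Prod.smul_fst, Prod.smul_snd, Pi.smul_apply,
    smul_eq_mul, RingHom.id_apply, Prod.smul_mk, Prod.mk.injEq]; exact ⟨by ring, trivial⟩
  left_inv x := by show T (-d) (T d x) = x; rw [T_comp, neg_add_cancel, T_zero]
  right_inv x := by show T d (T (-d) x) = x; rw [T_comp, add_neg_cancel, T_zero]

lemma Te_apply (d : Fin 2 → ℝ) (x) : Te d x = T d x := rfl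

/-- `ℝ × ℝ² ≃ ℝ³`. -/
noncomputable def ι3 : (ℝ × (Fin 2 → ℝ)) ≃ₗ[ℝ] (Fin 3 → ℝ) where
  toFun x := ![x.1, x.2 0, x.2 1]
  invFun y := (y 0, ![y 1, y 2])
  map_add' x y := by funext i; fin_cases i <;> simp
  map_smul' c x := by funext i; fin_cases i <;> simp
  left_inv x := by
    refine Prod.ext ?_ (funext fun i => ?_)
    · rfl
    · fin_cases i <;> rfl
  right_inv y := by funext i; fin_cases i <;> rfl

noncomputable def piSwap (α β : Type) : (α → β → ℝ) ≃ₗ[ℝ] (β → α → ℝ) where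
  toFun f b a := f a b
  invFun f a b := f b a
  map_add' _ _ := rfl
  map_smul' _ _ := rfl
  left_inv _ := rfl
  right_inv _ := rfl


/-- Kernel of a diagonal map on a pi type is the pi of kernels. -/
noncomputable def kerPi {ι M N : Type} [AddCommGroup M] [Module ℝ M]
    [AddCommGroup N] [Module ℝ N] (f : M →ₗ[ℝ] N) :
    LinearMap.ker (LinearMap.pi (fun i : ι => f ∘ₗ LinearMap.proj i)) ≃ₗ[ℝ]
      (ι → LinearMap.ker f) where
  toFun x i := ⟨x.1 i, show f (x.1 i) = 0 from congrFun (LinearMap.mem_ker.mp x.2) i⟩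
  invFun y := ⟨fun i => (y i).1, LinearMap.mem_ker.mpr (funext fun i => (y i).2)⟩
  map_add' x y := by funext i; exact Subtype.ext rfl
  map_smul' c x := by funext i; exact Subtype.ext rfl
  left_inv x := Subtype.ext rfl
  right_inv y := funext fun i => Subtype.ext rfl

lemma rangePi {ι M N : Type} [Fintype ι] [AddCommGroup M] [Module ℝ M]
    [AddCommGroup N] [Module ℝ N] (f : M →ₗ[ℝ] N) :
    LinearMap.range (LinearMap.pi (fun i : ι => f ∘ₗ LinearMap.proj i)) =
      Submodule.pi Set.univ (fun _ => LinearMap.range f) := by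
  ext x
  simp only [LinearMap.mem_range, Submodule.mem_pi, Set.mem_univ, forall_true_left]
  constructor
  · rintro ⟨u, rfl⟩ i
    exact ⟨u i, rfl⟩
  · intro h
    choose u hu using h
    exact ⟨u, funext fun i => hu i⟩

/-- The moment cosheaf over a framework `(G, p)` in `ℝ²` is isomorphic to the constant
cosheaf with stalk `ℝ³ ≅ ⋀²ℝ² ⊕ ℝ²`: there are linear isomorphisms of the vertex and
edge stalks commuting with the extension maps `T`, hence the homology of the moment
cosheaf is three copies of the graph homology: `H₁M ≅ (H₁G)³` and `H₀M ≅ (H₀G)³`. -/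
theorem moment_cosheaf_iso_constant
    {V E : Type} [Fintype V] [Fintype E] [DecidableEq V]
    (s t : E → V) (p : V → Fin 2 → ℝ)
    (bdM : (E → ℝ × (Fin 2 → ℝ)) →ₗ[ℝ] (V → ℝ × (Fin 2 → ℝ)))
    (hbdM : ∀ (w : E → ℝ × (Fin 2 → ℝ)) (v : V), bdM w v =
      ∑ e, ((if t e = v then (1 : ℝ) else 0) - (if s e = v then 1 else 0))
        • T (p v - (1/2 : ℝ) • (p (s e) + p (t e))) (w e))
    (bdG : (E → ℝ) →ₗ[ℝ] (V → ℝ))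
    (hbdG : ∀ (w : E → ℝ) (v : V), bdG w v =
      ∑ e, w e * ((if t e = v then (1 : ℝ) else 0) - (if s e = v then 1 else 0))) :
    (∃ (φv : V → (ℝ × (Fin 2 → ℝ)) ≃ₗ[ℝ] (ℝ × (Fin 2 → ℝ)))
       (φe : E → (ℝ × (Fin 2 → ℝ)) ≃ₗ[ℝ] (ℝ × (Fin 2 → ℝ))),
      ∀ e : E,
        (∀ x, φv (t e) (T (p (t e) - (1/2 : ℝ) • (p (s e) + p (t e))) x) = φe e x) ∧
        (∀ x, φv (s e) (T (p (s e) - (1/2 : ℝ) • (p (s e) + p (t e))) x) = φe e x)) ∧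
    Nonempty (LinearMap.ker bdM ≃ₗ[ℝ] (Fin 3 → LinearMap.ker bdG)) ∧
    Nonempty (((V → ℝ × (Fin 2 → ℝ)) ⧸ LinearMap.range bdM) ≃ₗ[ℝ]
      (Fin 3 → ((V → ℝ) ⧸ LinearMap.range bdG))) := by
  -- centers of edges
  set c : E → Fin 2 → ℝ := fun e => (1/2 : ℝ) • (p (s e) + p (t e)) with hc
  -- Part 1 : the stalkwise isomorphism
  have part1 : (∃ (φv : V → (ℝ × (Fin 2 → ℝ)) ≃ₗ[ℝ] (ℝ × (Fin 2 → ℝ)))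
       (φe : E → (ℝ × (Fin 2 → ℝ)) ≃ₗ[ℝ] (ℝ × (Fin 2 → ℝ))),
      ∀ e : E,
        (∀ x, φv (t e) (T (p (t e) - (1/2 : ℝ) • (p (s e) + p (t e))) x) = φe e x) ∧
        (∀ x, φv (s e) (T (p (s e) - (1/2 : ℝ) • (p (s e) + p (t e))) x) = φe e x)) := by
    refine ⟨fun v => Te (-(p v)), fun e => Te (-(c e)), fun e => ⟨fun x => ?_, fun x => ?_⟩⟩ <;>
      · show T _ (T _ x) = T _ x
        rw [T_comp]; congr 1; abel
  -- the conjugating equivalences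
  let Φ : (V → ℝ × (Fin 2 → ℝ)) ≃ₗ[ℝ] (Fin 3 → V → ℝ) :=
    (LinearEquiv.piCongrRight fun v => (Te (-(p v))).trans ι3).trans (piSwap V (Fin 3))
  let Ψ : (E → ℝ × (Fin 2 → ℝ)) ≃ₗ[ℝ] (Fin 3 → E → ℝ) :=
    (LinearEquiv.piCongrRight fun e => (Te (-(c e))).trans ι3).trans (piSwap E (Fin 3))
  let B : (Fin 3 → E → ℝ) →ₗ[ℝ] (Fin 3 → V → ℝ) :=
    LinearMap.pi (fun i : Fin 3 => bdG ∘ₗ LinearMap.proj i)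
  have key : ∀ w, Φ (bdM w) = B (Ψ w) := by
    intro w
    funext i v
    show ι3 (Te (-(p v)) (bdM w v)) i = bdG (fun e => ι3 (Te (-(c e)) (w e)) i) v
    rw [hbdM, hbdG]
    have step : ∀ e, Te (-(p v)) (T (p v - c e) (w e)) = Te (-(c e)) (w e) := by
      intro e
      show T _ (T _ _) = T _ _
      rw [T_comp]; congr 1; abel
    rw [map_sum, map_sum, Finset.sum_apply]
    refine Finset.sum_congr rfl fun e _ => ?_
    rw [map_smul, map_smul, step, Pi.smul_apply, smul_eq_mul, mul_comm]
  have keyC : Φ.toLinearMap ∘ₗ bdM = B ∘ₗ Ψ.toLinearMap := LinearMap.ext key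
  refine ⟨part1, ?_, ?_⟩
  · -- kernels
    have hker : (LinearMap.ker bdM).map (Ψ : _ →ₗ[ℝ] _) = LinearMap.ker B := by
      ext x
      rw [Submodule.mem_map_equiv, LinearMap.mem_ker, LinearMap.mem_ker]
      constructor
      · intro h
        have := key (Ψ.symm x)
        rw [h, map_zero, Ψ.apply_symm_apply] at this
        exact this.symm
      · intro h
        have := key (Ψ.symm x)
        simp only [LinearEquiv.apply_symm_apply, h] at this
        exact Φ.map_eq_zero_iff.mp this
    exact ⟨((Ψ.submoduleMap (LinearMap.ker bdM)).trans
      (LinearEquiv.ofEq _ _ hker)).trans (kerPi bdG)⟩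
  · -- cokernels
    have hrange : (LinearMap.range bdM).map (Φ : _ →ₗ[ℝ] _) = LinearMap.range B := by
      rw [← LinearMap.range_comp, keyC, LinearMap.range_comp_of_range_eq_top _ Ψ.range]
    exact ⟨((Submodule.Quotient.equiv _ _ Φ hrange).trans
      (Submodule.quotEquivOfEq _ _ (rangePi bdG))).trans
      (Submodule.quotientPi (fun _ : Fin 3 => LinearMap.range bdG))⟩
end

section
/- For a connected framework (G,p) in ℝ², the anchored cosheaf boundary map ∂_N is surjective, i.e. H₀N = 0. -/
open Module Function

section aux
set_option linter.unusedSectionVars false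
variable {V E : Type} [Fintype V] [Fintype E] [DecidableEq V]

/-- Graph boundary map on real edge/vertex chains. -/
def gradB (s t : E → V) : (E → ℝ) →ₗ[ℝ] (V → ℝ) where
  toFun m v := ∑ e, ((if t e = v then (1:ℝ) else 0) - if s e = v then 1 else 0) * m e
  map_add' x y := by
    funext v
    simp [mul_add, Finset.sum_add_distrib]
  map_smul' r x := by
    funext v
    simp only [Pi.smul_apply, smul_eq_mul, RingHom.id_apply, Finset.mul_sum]
    exact Finset.sum_congr rfl fun e _ => by ring

lemma single_edge_mem (s t : E → V) (e : E) :
    (Pi.single (t e) 1 - Pi.single (s e) 1 : V → ℝ) ∈ LinearMap.range (gradB s t) := by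
  classical
  refine ⟨fun e' => if e' = e then 1 else 0, ?_⟩
  funext v
  show (∑ e', ((if t e' = v then (1:ℝ) else 0) - if s e' = v then 1 else 0)
      * (if e' = e then 1 else 0)) = _
  rw [Finset.sum_congr rfl (fun e' _ => show _ = if e' = e then
      ((if t e' = v then (1:ℝ) else 0) - if s e' = v then 1 else 0) else 0 by
    by_cases h : e' = e <;> simp [h])]
  rw [Finset.sum_ite_eq' Finset.univ e]
  simp [Pi.single_apply, eq_comm]

lemma diff_mem (s t : E → V) (a b : V)
    (h : Relation.ReflTransGen
      (fun a b => ∃ e, (s e = a ∧ t e = b) ∨ (s e = b ∧ t e = a)) a b) :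
    (Pi.single b 1 - Pi.single a 1 : V → ℝ) ∈ LinearMap.range (gradB s t) := by
  induction h with
  | refl => simp
  | @tail b' c' hab hbc ih =>
    have hedge : (Pi.single c' 1 - Pi.single b' 1 : V → ℝ) ∈ LinearMap.range (gradB s t) := by
      obtain ⟨e, he | he⟩ := hbc
      · rw [← he.1, ← he.2]; exact single_edge_mem s t e
      · rw [← he.1, ← he.2]
        have := Submodule.neg_mem _ (single_edge_mem s t e)
        simpa using this
    have := Submodule.add_mem _ hedge ih
    simpa using this

lemma sumzero_mem (s t : E → V) (c : V → ℝ) (h : ∑ v, c v = 0)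
    (hconn : ∀ a b : V, Relation.ReflTransGen
      (fun a b => ∃ e, (s e = a ∧ t e = b) ∨ (s e = b ∧ t e = a)) a b)
    [Nonempty V] :
    c ∈ LinearMap.range (gradB s t) := by
  obtain ⟨v0⟩ := ‹Nonempty V›
  have hc : c = ∑ v, c v • (Pi.single v 1 - Pi.single v0 1 : V → ℝ) := by
    funext w
    simp only [Finset.sum_apply, Pi.smul_apply, Pi.sub_apply, smul_eq_mul,
      Pi.single_apply, mul_sub]
    rw [Finset.sum_sub_distrib]
    simp only [mul_ite, mul_one, mul_zero]
    rw [Finset.sum_ite_eq Finset.univ w]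
    by_cases hw : w = v0 <;> simp [hw, ← Finset.sum_mul, h]
  rw [hc]
  exact Submodule.sum_mem _ fun v _ =>
    Submodule.smul_mem _ _ (diff_mem s t v0 v (hconn v0 v))

end aux

/-- For a connected framework `(G, p)` in `ℝ²` with at least one edge, the anchored
cosheaf boundary map is surjective, i.e. `H₀N = 0`.  The anchored cosheaf is the
quotient of the moment cosheaf by the axial force cosheaf, so its zeroth homology
vanishes iff the composite of `bdM` with the quotient by the subspace `Z` of pure
nodal forces (zero moment component at every vertex) is surjective. -/
theorem anchored_boundary_surjective
    {V E : Type} [Fintype V] [Fintype E] [DecidableEq V] [Nonempty V] [Nonempty E]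
    (s t : E → V) (p : V → Fin 2 → ℝ)
    (hconn : ∀ a b : V, Relation.ReflTransGen
      (fun a b => ∃ e, (s e = a ∧ t e = b) ∨ (s e = b ∧ t e = a)) a b)
    (hreal : ∀ e : E, p (s e) ≠ p (t e))
    (bdM : (E → ℝ × (Fin 2 → ℝ)) →ₗ[ℝ] (V → ℝ × (Fin 2 → ℝ)))
    (hbdM : ∀ (w : E → ℝ × (Fin 2 → ℝ)) (v : V), bdM w v =
      ∑ e, ((if t e = v then (1 : ℝ) else 0) - (if s e = v then 1 else 0))
        • T (p v - (1/2 : ℝ) • (p (s e) + p (t e))) (w e))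
    (Z : Submodule ℝ (V → ℝ × (Fin 2 → ℝ)))
    (hZ : ∀ x : V → ℝ × (Fin 2 → ℝ), x ∈ Z ↔ ∀ v : V, (x v).1 = 0) :
    Surjective (Z.mkQ ∘ₗ bdM) := by
  classical
  obtain ⟨e0⟩ := ‹Nonempty E›
  set d0 : Fin 2 → ℝ := p (t e0) - p (s e0) with hd0
  have hd0ne : d0 ≠ 0 := sub_ne_zero.mpr (Ne.symm (hreal e0))
  set q : ℝ := d0 0 * d0 0 + d0 1 * d0 1 with hqdef
  have hq : 0 < q := by
    rcases Function.ne_iff.mp hd0ne with ⟨i, hi⟩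
    fin_cases i
    · exact add_pos_of_pos_of_nonneg (mul_self_pos.mpr hi) (mul_self_nonneg _)
    · exact add_pos_of_nonneg_of_pos (mul_self_nonneg _) (mul_self_pos.mpr hi)
  intro yq
  obtain ⟨y, rfl⟩ := Z.mkQ_surjective yq
  set c : V → ℝ := fun v => (y v).1 with hc
  set S : ℝ := ∑ v, c v with hS
  set F : Fin 2 → ℝ := ![S / q * d0 1, -(S / q * d0 0)] with hF
  have hF0 : F 0 = S / q * d0 1 := rfl
  have hF1 : F 1 = -(S / q * d0 0) := rfl
  have hFw : wedge F d0 = S := by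
    simp only [wedge, hF0, hF1]
    field_simp
    ring
  -- the first part of the chain
  set w1 : E → ℝ × (Fin 2 → ℝ) := fun e => if e = e0 then ((0:ℝ), F) else 0 with hw1
  -- moment component of bdM applied to any chain
  have hmom : ∀ (w : E → ℝ × (Fin 2 → ℝ)) (v : V), (bdM w v).1 =
      ∑ e, ((if t e = v then (1:ℝ) else 0) - if s e = v then 1 else 0)
        * ((w e).1 + wedge (w e).2 (p v - (1/2 : ℝ) • (p (s e) + p (t e)))) := by
    intro w v
    rw [hbdM, Prod.fst_sum]
    exact Finset.sum_congr rfl fun e _ => by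
      simp [T, Prod.smul_fst, smul_eq_mul]
  have hL1 : ∀ v : V, (bdM w1 v).1 =
      ((if t e0 = v then (1:ℝ) else 0) - if s e0 = v then 1 else 0)
        * wedge F (p v - (1/2 : ℝ) • (p (s e0) + p (t e0))) := by
    intro v
    rw [hmom]
    rw [Finset.sum_eq_single_of_mem e0 (Finset.mem_univ _)
      (fun e _ he => by simp [hw1, he, wedge])]
    simp [hw1]
  have hsum1 : ∑ v, (bdM w1 v).1 = S := by
    have : ∀ v : V, (bdM w1 v).1 =
        (if t e0 = v then wedge F (p v - (1/2 : ℝ) • (p (s e0) + p (t e0))) else 0)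
        - (if s e0 = v then wedge F (p v - (1/2 : ℝ) • (p (s e0) + p (t e0))) else 0) := by
      intro v
      rw [hL1]
      by_cases h1 : t e0 = v <;> by_cases h2 : s e0 = v <;> simp [h1, h2]
    rw [Finset.sum_congr rfl fun v _ => this v, Finset.sum_sub_distrib,
      Finset.sum_ite_eq Finset.univ (t e0), Finset.sum_ite_eq Finset.univ (s e0)]
    simp only [Finset.mem_univ, if_true]
    rw [← hFw]
    simp only [wedge, hd0, Pi.sub_apply, Pi.smul_apply, Pi.add_apply, smul_eq_mul]
    ring
  -- remaining target has sum zero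
  have hcz : ∑ v, (c v - (bdM w1 v).1) = 0 := by
    rw [Finset.sum_sub_distrib, hsum1, ← hS, sub_self]
  obtain ⟨m, hm⟩ := sumzero_mem s t (fun v => c v - (bdM w1 v).1) hcz hconn
  set w2 : E → ℝ × (Fin 2 → ℝ) := fun e => (m e, 0) with hw2
  have hL2 : ∀ v : V, (bdM w2 v).1 = c v - (bdM w1 v).1 := by
    intro v
    rw [hmom]
    have : ∀ e : E, ((if t e = v then (1:ℝ) else 0) - if s e = v then 1 else 0)
        * ((w2 e).1 + wedge (w2 e).2 (p v - (1/2 : ℝ) • (p (s e) + p (t e))))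
        = ((if t e = v then (1:ℝ) else 0) - if s e = v then 1 else 0) * m e := by
      intro e; simp [hw2, wedge]
    rw [Finset.sum_congr rfl fun e _ => this e]
    have := congrFun hm v
    exact this
  refine ⟨w1 + w2, ?_⟩
  have hmem : bdM (w1 + w2) - y ∈ Z := by
    rw [hZ]
    intro v
    have : (bdM (w1 + w2) v).1 = (bdM w1 v).1 + (bdM w2 v).1 := by
      rw [map_add]; rfl
    simp only [Pi.sub_apply, Prod.fst_sub, this, hL2]
    simp [hc]
  show Z.mkQ (bdM (w1 + w2)) = Z.mkQ y
  rw [Submodule.mkQ_apply, Submodule.mkQ_apply, Submodule.Quotient.eq]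
  exact hmem
end

section
/- For the square framework in ℝ², the anchored cosheaf boundary map ∂_N : ℝ⁸ → ℝ⁴ is surjective with 4-dimensional kernel, and the induced map π₊ : H₁M → H₁N from moment-frame self-stresses is injective with 3-dimensional image; hence there is exactly one anchored self-stress class not arising from a moment-frame self-stress, corresponding to the parallelogram mechanism. -/
open Module Function

/-- The three-parameter family of moment-frame self-stresses of the square:
a constant force `F` on every edge and moments obtained by transporting a base
moment `M₀` around the cycle. -/
noncomputable def phi : (ℝ × (Fin 2 → ℝ)) →ₗ[ℝ] (Fin 4 → ℝ × (Fin 2 → ℝ)) where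
  toFun x := ![(x.1, x.2), (x.1 + (x.2 0 - x.2 1)/2, x.2),
               (x.1 + x.2 0, x.2), (x.1 + (x.2 0 + x.2 1)/2, x.2)]
  map_add' a b := by
    funext e
    fin_cases e <;> simp [Prod.ext_iff] <;> ring
  map_smul' c a := by
    funext e
    fin_cases e <;> simp [Prod.ext_iff, smul_eq_mul] <;> ring

set_option maxHeartbeats 1000000 in
/-- For the square framework in `ℝ²` (4-cycle at the unit square corners):
the anchored cosheaf boundary map `bdN : ℝ⁸ → ℝ⁴` is surjective with 4-dimensional
kernel, the moment cosheaf boundary `bdM` has 3-dimensional kernel, and the induced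
map `π₊ : H₁M → H₁N` is injective with 3-dimensional image; hence exactly one
anchored self-stress class does not arise from a moment-frame self-stress
(it corresponds to the parallelogram mechanism).
Here an anchored edge stalk `N_e ≅ ℝ × ℝ` records the midpoint moment `M` and the
shear scalar `σ` (the shear force being `σ` times the unit normal of the edge), the
vertex stalks `N_v ≅ ℝ` record moments, the anchored extension maps send `(M, σ)` to
`M ∓ σ/2`, and the projection `π : C₁M → C₁N` is `(M, F) ↦ (M, −F ∧ (p_t − p_s))`. -/

theorem square_anchored_count
    (p : Fin 4 → Fin 2 → ℝ)
    (hp : p = ![![0, 0], ![1, 0], ![1, 1], ![0, 1]])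
    (s : Fin 4 → Fin 4) (hs : s = id)
    (t : Fin 4 → Fin 4) (ht : t = fun i => i + 1)
    (bdM : (Fin 4 → ℝ × (Fin 2 → ℝ)) →ₗ[ℝ] (Fin 4 → ℝ × (Fin 2 → ℝ)))
    (hbdM : ∀ (w : Fin 4 → ℝ × (Fin 2 → ℝ)) (v : Fin 4), bdM w v =
      ∑ e, ((if t e = v then (1 : ℝ) else 0) - (if s e = v then 1 else 0))
        • T (p v - (1/2 : ℝ) • (p (s e) + p (t e))) (w e))
    (bdN : (Fin 4 → ℝ × ℝ) →ₗ[ℝ] (Fin 4 → ℝ))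
    (hbdN : ∀ (w : Fin 4 → ℝ × ℝ) (v : Fin 4), bdN w v =
      ∑ e, ((if t e = v then (1 : ℝ) else 0) * ((w e).1 - (w e).2 / 2)
        - (if s e = v then (1 : ℝ) else 0) * ((w e).1 + (w e).2 / 2)))
    (π : (Fin 4 → ℝ × (Fin 2 → ℝ)) →ₗ[ℝ] (Fin 4 → ℝ × ℝ))
    (hπ : ∀ (w : Fin 4 → ℝ × (Fin 2 → ℝ)) (e : Fin 4),
      π w e = ((w e).1, - wedge (w e).2 (p (t e) - p (s e))))
    (πplus : LinearMap.ker bdM →ₗ[ℝ] LinearMap.ker bdN)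
    (hπplus : ∀ w : LinearMap.ker bdM, (πplus w : Fin 4 → ℝ × ℝ) = π w) :
    Surjective bdN ∧
    finrank ℝ (LinearMap.ker bdN) = 4 ∧
    finrank ℝ (LinearMap.ker bdM) = 3 ∧
    Injective πplus ∧
    finrank ℝ (LinearMap.range πplus) = 3 ∧
    finrank ℝ (LinearMap.ker bdN ⧸ LinearMap.range πplus) = 1 := by

  subst hp hs ht
  -- surjectivity of the anchored boundary map
  have hsurj : Surjective bdN := by
    intro y
    set S := y 0 + y 1 + y 2 + y 3 with hS
    refine ⟨![(0, -S/4), (-y 1 + S/4, -S/4), (-y 1 - y 2 + S/2, -S/4),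
              (-y 1 - y 2 - y 3 + 3*S/4, -S/4)], ?_⟩
    funext v
    rw [hbdN]
    fin_cases v <;>
      simp (config := { decide := true }) only [Fin.sum_univ_four, Fin.isValue, id_eq,
        Matrix.cons_val_zero, Matrix.cons_val_one, Matrix.head_cons,
        Matrix.cons_val_two, Matrix.tail_cons, Matrix.cons_val_three,
        if_true, if_false, reduceIte, Fin.mk_zero, Fin.mk_one]
    case _ => ring
    case _ => ring
    case _ => show _ = y 2; ring
    case _ => show _ = y 3; ring
  -- the kernel of bdM is exactly the range of phi
  have hker : LinearMap.ker bdM = LinearMap.range phi := by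
    apply le_antisymm
    · intro w hw
      have h : ∀ v, bdM w v = 0 := fun v => congrFun hw v
      have h0 := h 0; have h1 := h 1; have h2 := h 2; have h3 := h 3
      rw [hbdM] at h0 h1 h2 h3
      simp (config := { decide := true }) [Fin.sum_univ_four, T, wedge,
        Matrix.vecHead, Matrix.vecTail, Function.comp,
        Prod.smul_mk, Prod.mk_add_mk, Prod.ext_iff, funext_iff,
        Fin.forall_fin_two] at h0 h1 h2 h3
      refine ⟨((w 0).1, (w 0).2), ?_⟩
      funext e
      fin_cases e <;>
        simp (config := { decide := true }) [phi, Prod.ext_iff, funext_iff,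
          Fin.forall_fin_two, Matrix.vecHead, Matrix.vecTail, Function.comp] <;>
        (obtain ⟨a0, b0, c0⟩ := h0; obtain ⟨a1, b1, c1⟩ := h1; obtain ⟨a2, b2, c2⟩ := h2;
         obtain ⟨a3, b3, c3⟩ := h3;
         refine ⟨by linarith, by linarith, by linarith⟩)
    · rintro w ⟨x, rfl⟩
      have : bdM (phi x) = 0 := by
        funext v
        rw [hbdM]
        fin_cases v <;>
          simp (config := { decide := true }) [Fin.sum_univ_four, T, wedge,
            Matrix.vecHead, Matrix.vecTail, Function.comp, phi,
            Prod.smul_mk, Prod.mk_add_mk, Prod.ext_iff, funext_iff,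
            Fin.forall_fin_two] <;>
          ring_nf
      exact this
  have hphi_inj : Injective phi := by
    intro a b hab
    have h := congrFun hab 0
    simp [phi, Prod.ext_iff] at h
    exact Prod.ext h.1 h.2
  -- dimension counts
  have hdomN : finrank ℝ (Fin 4 → ℝ × ℝ) = 8 := by
    simp [Module.finrank_pi_fintype, Module.finrank_prod, Module.finrank_self]
  have hcodN : finrank ℝ (Fin 4 → ℝ) = 4 := by simp [Module.finrank_pi]
  have hkerN : finrank ℝ (LinearMap.ker bdN) = 4 := by
    have hrn := LinearMap.finrank_range_add_finrank_ker bdN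
    rw [LinearMap.range_eq_top.mpr hsurj, finrank_top, hdomN, hcodN] at hrn
    omega
  have hkerM : finrank ℝ (LinearMap.ker bdM) = 3 := by
    rw [hker, LinearMap.finrank_range_of_inj hphi_inj]
    simp [Module.finrank_prod, Module.finrank_self, Module.finrank_pi]
  -- injectivity of the induced map
  have hπinj : Injective πplus := by
    rw [injective_iff_map_eq_zero]
    intro a ha
    have hval : π (a : Fin 4 → ℝ × (Fin 2 → ℝ)) = 0 := by
      rw [← hπplus a, ha]
      rfl
    have hmem : (a : Fin 4 → ℝ × (Fin 2 → ℝ)) ∈ LinearMap.range phi := hker ▸ a.2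
    obtain ⟨x, hx⟩ := hmem
    have h0 := congrFun hval 0
    have h1 := congrFun hval 1
    rw [hπ] at h0 h1
    rw [← hx] at h0 h1
    simp (config := { decide := true }) [phi, wedge, Prod.ext_iff,
      Matrix.vecHead, Matrix.vecTail, Function.comp] at h0 h1
    have hx0 : x = 0 := by
      refine Prod.ext h0.1 (funext fun i => ?_)
      fin_cases i
      · exact h1.2
      · simpa using h0.2
    apply Subtype.ext
    rw [← hx, hx0, map_zero]
    rfl
  have hrange : finrank ℝ (LinearMap.range πplus) = 3 := by
    rw [LinearMap.finrank_range_of_inj hπinj, hkerM]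
  have hquot : finrank ℝ (LinearMap.ker bdN ⧸ LinearMap.range πplus) = 1 := by
    have := Submodule.finrank_quotient_add_finrank (LinearMap.range πplus)
    rw [hrange, hkerN] at this
    omega
  exact ⟨hsurj, hkerN, hkerM, hπinj, hrange, hquot⟩
end
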